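/- For all integers k ≥ 2 and r ≥ 2, the sequence u_0, u_1, ..., u_{n-1}, u_0 with u_j ≡ j·((k-1)(r-1)+1)/n in ℝ/ℤ, where n = (2k-1)(r-1)+2, is a Hamiltonian cycle of the Andrásfai graph A_{k,r}. -/

import Mathlib

/-- The generalised Andrásfai graph `A_{k,r}`. -/
def andrasfai (k r : ℕ) : SimpleGraph (Fin ((2*k-1)*(r-1)+2)) :=
  SimpleGraph.fromRel fun i j =>
    (((k : ℚ) - 1) / (2 * k - 1) <
        (min (((i.val : ℤ) - (j.val : ℤ)).natAbs)
            ((2*k-1)*(r-1)+2 - ((i.val : ℤ) - (j.val : ℤ)).natAbs) : ℚ) /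
          ((2*k-1)*(r-1)+2)) ∧
    ((min (((i.val : ℤ) - (j.val : ℤ)).natAbs)
            ((2*k-1)*(r-1)+2 - ((i.val : ℤ) - (j.val : ℤ)).natAbs) : ℚ) /
          ((2*k-1)*(r-1)+2) < (k : ℚ) / (2 * k - 1))

namespace AndrasfaiHam

open SimpleGraph

/-- Walk along `f a, f (a+1), …, f (a+m)`. -/
def walkUp {V : Type*} {G : SimpleGraph V} (f : ℕ → V)
    (h : ∀ j, G.Adj (f j) (f (j+1))) (a : ℕ) : (m : ℕ) → G.Walk (f a) (f (a + m))
  | 0 => SimpleGraph.Walk.nil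
  | (m+1) => (walkUp f h a m).concat (h (a + m))

lemma walkUp_support {V : Type*} {G : SimpleGraph V} (f : ℕ → V)
    (h : ∀ j, G.Adj (f j) (f (j+1))) (a : ℕ) :
    ∀ m, (walkUp f h a m).support = (List.range (m+1)).map (fun i => f (a + i))
  | 0 => by simp [walkUp, List.range_succ]
  | (m+1) => by
    rw [walkUp, SimpleGraph.Walk.support_concat, walkUp_support f h a m]
    simp [List.range_succ, ← Nat.add_assoc]

lemma walkUp_edges {V : Type*} {G : SimpleGraph V} (f : ℕ → V)
    (h : ∀ j, G.Adj (f j) (f (j+1))) (a : ℕ) :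
    ∀ m, (walkUp f h a m).edges = (List.range m).map (fun i => s(f (a + i), f (a + i + 1)))
  | 0 => by simp [walkUp]
  | (m+1) => by
    rw [walkUp, SimpleGraph.Walk.edges_concat, walkUp_edges f h a m]
    simp [List.range_succ, ← Nat.add_assoc]

lemma min_abs (N S x y : ℕ) (hS : 1 ≤ S) (h2S : 2*S+1 ≤ N) (hx : x < N)
    (hcase : y = x + S ∨ (N ≤ x + S ∧ y = x + S - N)) :
    (((x:ℤ) - (y:ℤ)).natAbs = S ∨ ((x:ℤ) - (y:ℤ)).natAbs = N - S) ∧ x ≠ y := by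
  omega

/-- The key general construction: a cyclic sequence through all the vertices that
consists of edges is a Hamiltonian cycle. -/
lemma cyclic_ham {N : ℕ} (hN : 3 ≤ N) (G : SimpleGraph (Fin N)) (f : ℕ → Fin N)
    (hadj : ∀ j, G.Adj (f j) (f (j+1)))
    (hinj : ∀ i j, 1 ≤ i → i ≤ N → 1 ≤ j → j ≤ N → f i = f j → i = j)
    (hfN : f N = f 0)
    (hsurj : ∀ a : Fin N, ∃ j, 1 ≤ j ∧ j ≤ N ∧ f j = a)
    (v0 : Fin N) (hv0 : f 0 = v0) :
    ∃ w : G.Walk v0 v0, w.IsHamiltonianCycle ∧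
      w.support = (List.range (N+1)).map f := by
  subst hv0
  have h1N : 1 + (N-1) = N := by omega
  let p : G.Walk (f 1) (f 0) := (walkUp f hadj 1 (N-1)).copy rfl (by rw [h1N, hfN])
  have hps : p.support = (List.range N).map (fun i => f (1 + i)) := by
    show ((walkUp f hadj 1 (N-1)).copy _ _).support = _
    rw [SimpleGraph.Walk.support_copy, walkUp_support]
    congr 2
    omega
  have hpe : p.edges = (List.range (N-1)).map (fun i => s(f (1+i), f (1+i+1))) := by
    show ((walkUp f hadj 1 (N-1)).copy _ _).edges = _
    rw [SimpleGraph.Walk.edges_copy, walkUp_edges]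
  have hnodup : ((List.range N).map (fun i => f (1 + i))).Nodup := by
    refine List.Nodup.map_on ?_ List.nodup_range
    intro x hx y hy hxy
    simp only [List.mem_range] at hx hy
    have := hinj (1+x) (1+y) (by omega) (by omega) (by omega) (by omega) hxy
    omega
  refine ⟨SimpleGraph.Walk.cons (hadj 0) p, ?_, ?_⟩
  · rw [SimpleGraph.Walk.isHamiltonianCycle_iff_isCycle_and_support_count_tail_eq_one]
    constructor
    · rw [SimpleGraph.Walk.cons_isCycle_iff]
      constructor
      · exact SimpleGraph.Walk.IsPath.mk' (by rw [hps]; exact hnodup)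
      · rw [hpe]
        simp only [List.mem_map, List.mem_range]
        rintro ⟨i, hi, hEq⟩
        rw [Sym2.eq_iff] at hEq
        rcases hEq with ⟨h1, h2⟩ | ⟨h1, h2⟩
        · have := hinj (1+i) N (by omega) (by omega) (by omega) (le_refl N)
            (by rw [h1, ← hfN])
          omega
        · have e1 : 1 + i = 1 := hinj (1+i) 1 (by omega) (by omega) (by omega) (by omega) h1
          have e2 : 1 + i + 1 = N := hinj (1+i+1) N (by omega) (by omega) (by omega)
            (le_refl N) (h2.trans hfN.symm)
          omega
    · intro a
      rw [SimpleGraph.Walk.support_cons, List.tail_cons, hps]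
      refine List.count_eq_one_of_mem hnodup ?_
      obtain ⟨j, hj1, hjN, hja⟩ := hsurj a
      simp only [List.mem_map, List.mem_range]
      exact ⟨j - 1, by omega, by rw [show 1 + (j-1) = j by omega, hja]⟩
  · rw [SimpleGraph.Walk.support_cons, hps, List.range_succ_eq_map, List.map_cons,
      List.map_map]
    exact congrArg _ (List.map_congr_left fun a _ => congrArg f (by omega))

lemma mod_step (N S x : ℕ) (hx : x < N) (hS : S < N) :
    (x + S) % N = x + S ∨ (N ≤ x + S ∧ (x + S) % N = x + S - N) := by
  rcases Nat.lt_or_ge (x + S) N with h | h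
  · exact Or.inl (Nat.mod_eq_of_lt h)
  · exact Or.inr ⟨h, by rw [Nat.mod_eq_sub_mod h]; exact Nat.mod_eq_of_lt (by omega)⟩

end AndrasfaiHam

lemma andrasfai_adj (k r : ℕ) (hk : 2 ≤ k) (hr : 2 ≤ r) (x y : ℕ)
    (hx : x < (2*k-1)*(r-1)+2) (hy : y < (2*k-1)*(r-1)+2)
    (h2S : 2*((k-1)*(r-1)+1) + 1 ≤ (2*k-1)*(r-1)+2)
    (hd : ((x:ℤ) - (y:ℤ)).natAbs = (k-1)*(r-1)+1 ∨
      ((x:ℤ) - (y:ℤ)).natAbs = (2*k-1)*(r-1)+2 - ((k-1)*(r-1)+1))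
    (hne : x ≠ y) :
    (andrasfai k r).Adj ⟨x, hx⟩ ⟨y, hy⟩ := by
  have hk2 : (2:ℚ) ≤ (k:ℚ) := by exact_mod_cast hk
  have hr2 : (2:ℚ) ≤ (r:ℚ) := by exact_mod_cast hr
  have hd1 : (0:ℚ) < 2*(k:ℚ)-1 := by linarith
  have hd2 : (0:ℚ) < (2*(k:ℚ)-1)*((r:ℚ)-1)+2 := by
    nlinarith [mul_nonneg hd1.le (by linarith : (0:ℚ) ≤ (r:ℚ)-1)]
  have hNcast : (((2*k-1)*(r-1)+2 : ℕ) : ℚ) = (2*(k:ℚ)-1)*((r:ℚ)-1)+2 := by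
    push_cast [Nat.cast_sub (show 1 ≤ 2*k by omega), Nat.cast_sub (show 1 ≤ r by omega)]
    ring
  have hScast : (((k-1)*(r-1)+1 : ℕ) : ℚ) = ((k:ℚ)-1)*((r:ℚ)-1)+1 := by
    push_cast [Nat.cast_sub (show 1 ≤ k by omega), Nat.cast_sub (show 1 ≤ r by omega)]
    ring
  have hQ : 2*((((k-1)*(r-1)+1 : ℕ)) : ℚ) + 1 ≤ (((2*k-1)*(r-1)+2 : ℕ) : ℚ) := by
    exact_mod_cast h2S
  have key : (min ((((x:ℤ) - (y:ℤ)).natAbs : ℕ) : ℚ)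
      ((2*(k:ℚ)-1)*((r:ℚ)-1)+2 - ((((x:ℤ) - (y:ℤ)).natAbs : ℕ) : ℚ)))
      = (((k-1)*(r-1)+1 : ℕ) : ℚ) := by
    rcases hd with h | h
    · rw [h, min_eq_left]
      rw [← hNcast]
      linarith
    · have hDcast : (((((x:ℤ) - (y:ℤ)).natAbs : ℕ)) : ℚ)
          = (((2*k-1)*(r-1)+2 : ℕ) : ℚ) - (((k-1)*(r-1)+1 : ℕ) : ℚ) := by
        rw [h, Nat.cast_sub (by omega)]
      rw [hDcast, ← hNcast,
        show ((((2*k-1)*(r-1)+2 : ℕ) : ℚ)) - (((((2*k-1)*(r-1)+2 : ℕ)) : ℚ)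
          - (((k-1)*(r-1)+1 : ℕ) : ℚ)) = (((k-1)*(r-1)+1 : ℕ) : ℚ) by ring]
      exact min_eq_right (by linarith)
  unfold andrasfai
  rw [SimpleGraph.fromRel_adj]
  refine ⟨by simp only [ne_eq, Fin.mk.injEq]; exact hne, Or.inl ⟨?_, ?_⟩⟩
  · show ((k:ℚ) - 1) / (2 * (k:ℚ) - 1) <
      (min ((((x:ℤ) - (y:ℤ)).natAbs : ℕ) : ℚ)
        ((2*(k:ℚ)-1)*((r:ℚ)-1)+2 - ((((x:ℤ) - (y:ℤ)).natAbs : ℕ) : ℚ))) /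
        ((2*(k:ℚ)-1)*((r:ℚ)-1)+2)
    rw [key, hScast, div_lt_div_iff₀ hd1 hd2]
    nlinarith [mul_nonneg hd1.le (by linarith : (0:ℚ) ≤ (r:ℚ)-1)]
  · show (min ((((x:ℤ) - (y:ℤ)).natAbs : ℕ) : ℚ)
        ((2*(k:ℚ)-1)*((r:ℚ)-1)+2 - ((((x:ℤ) - (y:ℤ)).natAbs : ℕ) : ℚ))) /
        ((2*(k:ℚ)-1)*((r:ℚ)-1)+2) < (k:ℚ) / (2 * (k:ℚ) - 1)
    rw [key, hScast, div_lt_div_iff₀ hd2 hd1]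
    nlinarith [mul_nonneg hd1.le (by linarith : (0:ℚ) ≤ (r:ℚ)-1)]

/-- The sequence `u_0, u_1, …, u_{n-1}, u_0` with `u_j ≡ j·((k-1)(r-1)+1)/n` in `ℝ/ℤ`,
i.e. `u_j = j·((k-1)(r-1)+1) mod n` as a corner of the `n`-gon, where `n = (2k-1)(r-1)+2`,
is a Hamiltonian cycle of the Andrásfai graph `A_{k,r}`. -/
theorem andrasfai_hamiltonianCycle (k r : ℕ) (hk : 2 ≤ k) (hr : 2 ≤ r) :
    ∃ (w : (andrasfai k r).Walk
        (⟨0, by omega⟩ : Fin ((2*k-1)*(r-1)+2)) (⟨0, by omega⟩ : Fin ((2*k-1)*(r-1)+2))),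
      w.IsHamiltonianCycle ∧
      w.support = (List.range ((2*k-1)*(r-1)+2+1)).map
        (fun j => (⟨(j * ((k-1)*(r-1)+1)) % ((2*k-1)*(r-1)+2), Nat.mod_lt _ (by omega)⟩ :
          Fin ((2*k-1)*(r-1)+2))) := by
  -- abbreviations (only in our heads): N = (2*k-1)*(r-1)+2, S = (k-1)*(r-1)+1
  have hA : (2*k-1)*(r-1)+2 = 2*((k-1)*(r-1)+1) + (r-1) := by
    obtain ⟨k', rfl⟩ : ∃ k', k = k'+2 := ⟨k-2, by omega⟩
    obtain ⟨r', rfl⟩ : ∃ r', r = r'+2 := ⟨r-2, by omega⟩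
    simp only [show 2*(k'+2)-1 = 2*k'+3 by omega, show (k'+2)-1 = k'+1 by omega,
      show (r'+2)-1 = r'+1 by omega]
    ring
  have hS1 : 1 ≤ (k-1)*(r-1)+1 := by omega
  have h2S : 2*((k-1)*(r-1)+1) + 1 ≤ (2*k-1)*(r-1)+2 := by omega
  have hN3 : 3 ≤ (2*k-1)*(r-1)+2 := by omega
  have hcop : Nat.gcd ((2*k-1)*(r-1)+2) ((k-1)*(r-1)+1) = 1 := by
    have hdN := Nat.gcd_dvd_left ((2*k-1)*(r-1)+2) ((k-1)*(r-1)+1)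
    have hdS := Nat.gcd_dvd_right ((2*k-1)*(r-1)+2) ((k-1)*(r-1)+1)
    have hdr : Nat.gcd ((2*k-1)*(r-1)+2) ((k-1)*(r-1)+1) ∣ (r-1) := by
      have h := Nat.dvd_sub hdN (hdS.mul_left 2)
      rwa [show (2*k-1)*(r-1)+2 - 2*((k-1)*(r-1)+1) = r-1 by omega] at h
    have hd1 : Nat.gcd ((2*k-1)*(r-1)+2) ((k-1)*(r-1)+1) ∣ 1 := by
      have h := Nat.dvd_sub hdS (hdr.mul_left (k-1))
      rwa [show (k-1)*(r-1)+1 - (k-1)*(r-1) = 1 by omega] at h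
    exact Nat.dvd_one.mp hd1
  have hNpos : 0 < (2*k-1)*(r-1)+2 := by omega
  set f : ℕ → Fin ((2*k-1)*(r-1)+2) :=
    fun j => (⟨(j * ((k-1)*(r-1)+1)) % ((2*k-1)*(r-1)+2), Nat.mod_lt _ (by omega)⟩ :
      Fin ((2*k-1)*(r-1)+2)) with hfdef
  have hfval : ∀ j, (f j).val = (j * ((k-1)*(r-1)+1)) % ((2*k-1)*(r-1)+2) := fun j => rfl
  have hfN : f ((2*k-1)*(r-1)+2) = f 0 := by
    apply Fin.ext
    rw [hfval, hfval]
    simp [Nat.mul_mod_right]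
  have hadj : ∀ j, (andrasfai k r).Adj (f j) (f (j+1)) := by
    intro j
    have hy : (j+1) * ((k-1)*(r-1)+1) % ((2*k-1)*(r-1)+2)
        = (j * ((k-1)*(r-1)+1) % ((2*k-1)*(r-1)+2) + ((k-1)*(r-1)+1)) % ((2*k-1)*(r-1)+2) := by
      rw [add_mul, one_mul, Nat.mod_add_mod]
    have hxlt : j * ((k-1)*(r-1)+1) % ((2*k-1)*(r-1)+2) < (2*k-1)*(r-1)+2 :=
      Nat.mod_lt _ hNpos
    have hcase := AndrasfaiHam.mod_step ((2*k-1)*(r-1)+2) ((k-1)*(r-1)+1)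
      (j * ((k-1)*(r-1)+1) % ((2*k-1)*(r-1)+2)) hxlt (by omega)
    rw [← hy] at hcase
    obtain ⟨hmin, hne⟩ := AndrasfaiHam.min_abs ((2*k-1)*(r-1)+2) ((k-1)*(r-1)+1)
      (j * ((k-1)*(r-1)+1) % ((2*k-1)*(r-1)+2))
      ((j+1) * ((k-1)*(r-1)+1) % ((2*k-1)*(r-1)+2)) hS1 h2S hxlt hcase
    exact andrasfai_adj k r hk hr _ _ (Nat.mod_lt _ hNpos) (Nat.mod_lt _ hNpos) h2S hmin hne
  have hcancel : ∀ i j : ℕ, i * ((k-1)*(r-1)+1) % ((2*k-1)*(r-1)+2)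
      = j * ((k-1)*(r-1)+1) % ((2*k-1)*(r-1)+2) →
      i % ((2*k-1)*(r-1)+2) = j % ((2*k-1)*(r-1)+2) :=
    fun i j h => Nat.ModEq.cancel_right_of_coprime hcop h
  have hinj : ∀ i j, 1 ≤ i → i ≤ (2*k-1)*(r-1)+2 → 1 ≤ j → j ≤ (2*k-1)*(r-1)+2 →
      f i = f j → i = j := by
    intro i j hi1 hiN hj1 hjN hEq
    have h : i * ((k-1)*(r-1)+1) % ((2*k-1)*(r-1)+2)
        = j * ((k-1)*(r-1)+1) % ((2*k-1)*(r-1)+2) := by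
      rw [← hfval, ← hfval, hEq]
    have hmod := hcancel i j h
    rcases Nat.lt_or_ge i ((2*k-1)*(r-1)+2) with hI | hI <;>
      rcases Nat.lt_or_ge j ((2*k-1)*(r-1)+2) with hJ | hJ
    · rwa [Nat.mod_eq_of_lt hI, Nat.mod_eq_of_lt hJ] at hmod
    · have hj' : j = (2*k-1)*(r-1)+2 := by omega
      subst hj'
      rw [Nat.mod_eq_of_lt hI, Nat.mod_self] at hmod
      omega
    · have hi' : i = (2*k-1)*(r-1)+2 := by omega
      subst hi'
      rw [Nat.mod_self, Nat.mod_eq_of_lt hJ] at hmod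
      omega
    · omega
  have hsurj : ∀ a : Fin ((2*k-1)*(r-1)+2), ∃ j, 1 ≤ j ∧ j ≤ (2*k-1)*(r-1)+2 ∧ f j = a := by
    intro a
    have hinj' : Function.Injective (fun b : Fin ((2*k-1)*(r-1)+2) => f b.val) := by
      intro b c hbc
      have h : b.val * ((k-1)*(r-1)+1) % ((2*k-1)*(r-1)+2)
          = c.val * ((k-1)*(r-1)+1) % ((2*k-1)*(r-1)+2) := by
        rw [← hfval, ← hfval]
        exact congrArg Fin.val hbc
      have hmod := hcancel _ _ h
      exact Fin.ext (by rwa [Nat.mod_eq_of_lt b.isLt, Nat.mod_eq_of_lt c.isLt] at hmod)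
    obtain ⟨b, hb⟩ := Finite.surjective_of_injective hinj' a
    rcases Nat.eq_zero_or_pos b.val with h0 | h0
    · refine ⟨(2*k-1)*(r-1)+2, by omega, le_refl _, ?_⟩
      rw [hfN, ← h0]
      exact hb
    · exact ⟨b.val, h0, le_of_lt b.isLt, hb⟩
  have hv0 : f 0 = (⟨0, by omega⟩ : Fin ((2*k-1)*(r-1)+2)) := by
    apply Fin.ext
    rw [hfval]
    simp
  exact AndrasfaiHam.cyclic_ham hN3 (andrasfai k r) f hadj hinj hfN hsurj _ hv0
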